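/- Let n and ℓ be positive integers with n ≥ 2ℓ, and let G be a triangle-free simple graph on a vertex set V of size n with matching number ν(G) = ℓ. Then there exists a partition V = X ⊔ Y ⊔ Z with X = {x₁, …, x_ℓ} and Y = {y₁, …, y_ℓ} (both of size ℓ) such that (i) {x_i, y_i} is an edge of G for every 1 ≤ i ≤ ℓ, and (ii) for every z ∈ Z, every neighbor of z in G lies in X. -/

import Mathlib

/-- `M` is a matching in the simple graph `G`: a finite set of edges of `G`
that are pairwise disjoint (share no vertex). -/
def IsMatchingFinset {V : Type*} (G : SimpleGraph V) (M : Finset (Sym2 V)) : Prop :=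
  ↑M ⊆ G.edgeSet ∧ (M : Set (Sym2 V)).Pairwise fun e f => ∀ v : V, v ∈ e → v ∉ f

theorem stmt_1 {V : Type*} [Fintype V] [DecidableEq V]
    (G : SimpleGraph V) [DecidableRel G.Adj]
    (n ℓ : ℕ) (hn : 0 < n) (hℓ : 0 < ℓ) (hn2ℓ : 2 * ℓ ≤ n)
    (hV : Fintype.card V = n)
    (htf : G.CliqueFree 3)
    (hexists : ∃ M : Finset (Sym2 V), IsMatchingFinset G M ∧ M.card = ℓ)
    (hmax : ∀ M : Finset (Sym2 V), IsMatchingFinset G M → M.card ≤ ℓ) :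
    ∃ x y : Fin ℓ → V,
      Function.Injective x ∧ Function.Injective y ∧
      (∀ i j : Fin ℓ, x i ≠ y j) ∧
      (∀ i : Fin ℓ, G.Adj (x i) (y i)) ∧
      (∀ z : V, z ∉ Set.range x → z ∉ Set.range y →
        ∀ w : V, G.Adj z w → w ∈ Set.range x) := by
  classical
  obtain ⟨M, ⟨hMsub, hMpair⟩, hMcard⟩ := hexists
  set R : Sym2 V → Sym2 V → Prop := fun e f => ∀ v : V, v ∈ e → v ∉ f with hR
  have hRsymm : Symmetric R := fun e f h v hvf hve => h v hve hvf
  haveI hRinst : Std.Symm R := ⟨fun a b h => hRsymm h⟩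
  -- Out z : z is unmatched
  set Out : V → Prop := fun z => ∀ e ∈ M, z ∉ e with hOutDef
  set Good : V → Prop := fun v => ∃ z, Out z ∧ G.Adj z v with hGoodDef
  -- adjacency of endpoints
  have hadj : ∀ e ∈ M, G.Adj e.out.1 e.out.2 := by
    intro e he
    have h1 : e ∈ G.edgeSet := hMsub he
    rw [← Quot.out_eq e] at h1
    exact h1
  -- Lemma A: neighbors of unmatched vertices are matched
  have lemA : ∀ z, Out z → ∀ w, G.Adj z w → ∃ e ∈ M, w ∈ e := by
    intro z hz w hzw
    by_contra hc
    push_neg at hc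
    have hw : Out w := fun e he => hc e he
    have hnotmem : s(z, w) ∉ M := fun hmem => hz _ hmem (Sym2.mem_mk_left z w)
    have hM' : IsMatchingFinset G (insert s(z, w) M) := by
      constructor
      · intro e he
        rcases Finset.mem_insert.mp (by exact_mod_cast he) with h | h
        · rw [h]; exact hzw
        · exact hMsub h
      · rw [Finset.coe_insert]
        refine (Set.pairwise_insert_of_symm).mpr ⟨hMpair, ?_⟩
        intro f hf _ v hv
        rcases Sym2.mem_iff.mp hv with rfl | rfl
        · exact hz f hf
        · exact hw f hf
    have := hmax _ hM'
    rw [Finset.card_insert_of_notMem hnotmem, hMcard] at this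
    omega
  -- Lemma B: not both endpoints of a matching edge have unmatched neighbors
  have lemB : ∀ e ∈ M, Good e.out.1 → Good e.out.2 → False := by
    intro e he ⟨z, hz, hza⟩ ⟨z', hz', hz'b⟩
    have hab := hadj e he
    have haine : e.out.1 ∈ e := Sym2.out_fst_mem e
    have hbine : e.out.2 ∈ e := Sym2.out_snd_mem e
    by_cases hzz : z = z'
    · subst hzz
      exact (SimpleGraph.is3Clique_triple_iff.mpr ⟨hza, hz'b, hab⟩).not_cliqueFree htf
    · -- augment
      have hzne : z ∉ e := hz e he
      have hz'ne : z' ∉ e := hz' e he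
      set e₁ : Sym2 V := s(z, e.out.1) with he₁
      set e₂ : Sym2 V := s(z', e.out.2) with he₂
      have he₂erase : e₂ ∉ M.erase e := by
        intro h
        exact hz' _ (Finset.mem_of_mem_erase h) (Sym2.mem_mk_left _ _)
      have he₁ins : e₁ ∉ insert e₂ (M.erase e) := by
        intro h
        rcases Finset.mem_insert.mp h with h | h
        · rcases Sym2.eq_iff.mp h with ⟨h1, _⟩ | ⟨h1, h2⟩
          · exact hzz h1
          · exact hzne (h1 ▸ hbine)
        · exact hz _ (Finset.mem_of_mem_erase h) (Sym2.mem_mk_left _ _)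
      have hpairf : ∀ f ∈ M.erase e, ∀ v ∈ e, v ∉ f := by
        intro f hf
        exact hMpair he (Finset.mem_coe.mpr (Finset.mem_of_mem_erase hf))
          (Ne.symm (Finset.ne_of_mem_erase hf))
      have hM' : IsMatchingFinset G (insert e₁ (insert e₂ (M.erase e))) := by
        constructor
        · intro f hf
          rcases Finset.mem_insert.mp (by exact_mod_cast hf) with h | h
          · rw [h]; exact hza
          · rcases Finset.mem_insert.mp h with h | h
            · rw [h]; exact hz'b
            · exact hMsub (Finset.mem_of_mem_erase h)
        · rw [Finset.coe_insert, Finset.coe_insert]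
          refine (Set.pairwise_insert_of_symm).mpr ⟨?_, ?_⟩
          · refine (Set.pairwise_insert_of_symm).mpr ⟨?_, ?_⟩
            · exact hMpair.mono (by
                intro f hf
                exact Finset.mem_coe.mpr (Finset.mem_of_mem_erase (by exact_mod_cast hf)))
            · intro f hf _ v hv
              rcases Sym2.mem_iff.mp hv with rfl | rfl
              · exact hz' f (Finset.mem_of_mem_erase (by exact_mod_cast hf))
              · exact hpairf f (by exact_mod_cast hf) _ hbine
          · intro f hf _ v hv
            rcases Sym2.mem_iff.mp hv with rfl | rfl
            · -- v = z
              rcases Set.mem_insert_iff.mp hf with rfl | hf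
              · intro hmem
                rcases Sym2.mem_iff.mp hmem with h | h
                · exact hzz h
                · exact hzne (h ▸ hbine)
              · exact hz f (Finset.mem_of_mem_erase (by exact_mod_cast hf))
            · -- v = e.out.1
              rcases Set.mem_insert_iff.mp hf with rfl | hf
              · intro hmem
                rcases Sym2.mem_iff.mp hmem with h | h
                · exact hz'ne (h ▸ haine)
                · exact hab.ne h
              · exact hpairf f (by exact_mod_cast hf) _ haine
      have hcard := hmax _ hM'
      rw [Finset.card_insert_of_notMem he₁ins, Finset.card_insert_of_notMem he₂erase,
        Finset.card_erase_of_mem he, hMcard] at hcard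
      omega
  -- define X, Y choices
  set X : Sym2 V → V := fun e => if Good e.out.2 then e.out.2 else e.out.1 with hX
  set Y : Sym2 V → V := fun e => if Good e.out.2 then e.out.1 else e.out.2 with hY
  have hXmem : ∀ e, X e ∈ e := by
    intro e; rw [hX]; dsimp only
    split
    · exact Sym2.out_snd_mem e
    · exact Sym2.out_fst_mem e
  have hYmem : ∀ e, Y e ∈ e := by
    intro e; rw [hY]; dsimp only
    split
    · exact Sym2.out_fst_mem e
    · exact Sym2.out_snd_mem e
  have hXYne : ∀ e ∈ M, X e ≠ Y e := by
    intro e he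
    have := (hadj e he).ne
    rw [hX, hY]; dsimp only
    split
    · exact Ne.symm this
    · exact this
  -- indexing
  set emb : Fin ℓ → Sym2 V := fun i => (M.equivFin.symm (Fin.cast hMcard.symm i) : Sym2 V)
    with hembdef
  have hembM : ∀ i, emb i ∈ M := fun i => (M.equivFin.symm (Fin.cast hMcard.symm i)).2
  have hembinj : Function.Injective emb := by
    intro i j hij
    have := Subtype.val_injective hij
    have := M.equivFin.symm.injective this
    simpa [Fin.ext_iff] using congrArg Fin.val this
  have hembsurj : ∀ e ∈ M, ∃ i, emb i = e := by
    intro e he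
    refine ⟨Fin.cast hMcard (M.equivFin ⟨e, he⟩), ?_⟩
    simp [hembdef]
  -- distinct edges are disjoint
  have hdisj : ∀ i j : Fin ℓ, emb i ≠ emb j → ∀ v ∈ emb i, v ∉ emb j := by
    intro i j hne
    exact hMpair (hembM i) (hembM j) hne
  refine ⟨fun i => X (emb i), fun i => Y (emb i), ?_, ?_, ?_, ?_, ?_⟩
  · intro i j h
    replace h : X (emb i) = X (emb j) := h
    by_contra hij
    have hne : emb i ≠ emb j := fun he => hij (hembinj he)
    exact hdisj i j hne _ (hXmem (emb i)) (h ▸ hXmem (emb j))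
  · intro i j h
    replace h : Y (emb i) = Y (emb j) := h
    by_contra hij
    have hne : emb i ≠ emb j := fun he => hij (hembinj he)
    exact hdisj i j hne _ (hYmem (emb i)) (h ▸ hYmem (emb j))
  · intro i j h
    replace h : X (emb i) = Y (emb j) := h
    by_cases hij : emb i = emb j
    · exact hXYne (emb j) (hembM j) (hij ▸ h)
    · exact hdisj i j hij _ (hXmem (emb i)) (h ▸ hYmem (emb j))
  · intro i
    have := hadj (emb i) (hembM i)
    rw [hX, hY]; dsimp only
    split
    · exact this.symm
    · exact this
  · intro z hzx hzy w hzw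
    have hzOut : Out z := by
      intro e he hze
      obtain ⟨i, rfl⟩ := hembsurj e he
      have hmem : z = (emb i).out.1 ∨ z = (emb i).out.2 := by
        rw [← Quot.out_eq (emb i)] at hze
        exact Sym2.mem_iff.mp hze
      by_cases hg : Good (emb i).out.2
      · rcases hmem with h | h
        · exact hzy ⟨i, by rw [hY]; simp [hg, h]⟩
        · exact hzx ⟨i, by rw [hX]; simp [hg, h]⟩
      · rcases hmem with h | h
        · exact hzx ⟨i, by rw [hX]; simp [hg, h]⟩
        · exact hzy ⟨i, by rw [hY]; simp [hg, h]⟩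
    obtain ⟨e, he, hwe⟩ := lemA z hzOut w hzw
    obtain ⟨i, rfl⟩ := hembsurj e he
    have hmem : w = (emb i).out.1 ∨ w = (emb i).out.2 := by
      rw [← Quot.out_eq (emb i)] at hwe
      exact Sym2.mem_iff.mp hwe
    refine ⟨i, ?_⟩
    rcases hmem with h | h
    · -- w = out.1, need ¬ Good out.2
      have hg1 : Good (emb i).out.1 := ⟨z, hzOut, h ▸ hzw⟩
      have hg2 : ¬ Good (emb i).out.2 := fun hg2 => lemB _ (hembM i) hg1 hg2
      rw [hX]; simp [hg2, h]
    · have hg2 : Good (emb i).out.2 := ⟨z, hzOut, h ▸ hzw⟩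
      rw [hX]; simp [hg2, h]
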